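/- Let S ⊆ ℝ₊ⁿ be compact and convex with 0 ∈ S. For a point a ∈ ℂⁿ with a ≠ 0 lying on a coordinate hyperplane, let J = {j₁ < ⋯ < j_ℓ} be the set of indices of the nonzero coordinates of a, and let S_J = {t ∈ ℝ^ℓ : the vector s with s_{j_k} = t_k and s_j = 0 for j ∉ J lies in S}. Then limsup over w → a with w ∈ (ℂ*)ⁿ of H_S(w) equals H_{S_J}(a_{j₁},…,a_{j_ℓ}). -/

import Mathlib

open Filter

/-- Support function over a general finite index type. -/
noncomputable def suppFnI {ι : Type*} [Fintype ι] (S : Set (ι → ℝ)) (ξ : ι → ℝ) : ℝ :=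
  sSup ((fun s => ∑ j, s j * ξ j) '' S)

/-- Logarithmic supporting function over a general finite index type. -/
noncomputable def HSI {ι : Type*} [Fintype ι] (S : Set (ι → ℝ)) (z : ι → ℂ) : ℝ :=
  suppFnI S (fun j => Real.log (‖z j‖))

open Classical in
/-- The value of `H_S` at a point `a ≠ 0` of a coordinate hyperplane, obtained as the
upper limit over `(ℂ*)ⁿ ∋ w → a`, equals `H_{S_J}` at the nonzero coordinates of `a`,
where `S_J` is the slice of `S` over the coordinates `J` where `a` is nonzero. -/
theorem stmt_8 {n : ℕ} (S : Set (Fin n → ℝ)) (hc : IsCompact S) (hconv : Convex ℝ S)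
    (h0 : (0 : Fin n → ℝ) ∈ S) (hpos : ∀ s ∈ S, ∀ i, 0 ≤ s i)
    (a : Fin n → ℂ) (ha : a ≠ 0) (hhyp : ∃ j, a j = 0) :
    limsup (fun w : Fin n → ℂ => HSI S w) (nhdsWithin a {w | ∀ j, w j ≠ 0}) =
      HSI {t : {j : Fin n // a j ≠ 0} → ℝ |
            (fun j : Fin n => if h : a j = 0 then 0 else t ⟨j, h⟩) ∈ S}
        (fun j => a j.1) := by
  classical
  set ext : ({j : Fin n // a j ≠ 0} → ℝ) → (Fin n → ℝ) :=
    fun t j => if h : a j = 0 then 0 else t ⟨j, h⟩ with hext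
  set T : Set ({j : Fin n // a j ≠ 0} → ℝ) := {t | ext t ∈ S} with hTdef
  set ξ : Fin n → ℝ := fun j => Real.log (‖a j‖) with hξ
  -- the filter is NeBot
  have hclos : a ∈ closure {w : Fin n → ℂ | ∀ j, w j ≠ 0} := by
    have htend : Tendsto (fun k : ℕ => (fun j => if a j = 0 then ((1/(k+1) : ℝ) : ℂ) else a j))
        atTop (nhds a) := by
      rw [tendsto_pi_nhds]
      intro j
      by_cases h : a j = 0
      · simp only [h, if_pos]
        have : Tendsto (fun k : ℕ => ((1/(k+1) : ℝ) : ℂ)) atTop (nhds ((0:ℝ):ℂ)) :=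
          (Complex.continuous_ofReal.tendsto _).comp tendsto_one_div_add_atTop_nhds_zero_nat
        simpa [h] using this
      · simpa [h] using tendsto_const_nhds
    refine mem_closure_of_tendsto htend ?_
    filter_upwards with k j
    by_cases h : a j = 0
    · simp only [h, if_pos]
      intro hcon
      have : (1/(k+1:ℝ)) = 0 := by exact_mod_cast hcon
      have hk : (0:ℝ) < 1/(k+1) := by positivity
      linarith
    · simpa [h] using h
  haveI hne : (nhdsWithin a {w : Fin n → ℂ | ∀ j, w j ≠ 0}).NeBot :=
    mem_closure_iff_nhdsWithin_neBot.mp hclos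
  -- bound on coordinates of S
  obtain ⟨M, hM0, hM⟩ : ∃ M : ℝ, 0 ≤ M ∧ ∀ s ∈ S, ∀ j, s j ≤ M := by
    obtain ⟨M, hM⟩ := hc.isBounded.exists_norm_le
    exact ⟨max M 0, le_max_right _ _, fun s hs j =>
      le_trans (le_trans (le_abs_self _) (norm_le_pi_norm s j)) (le_trans (hM s hs) (le_max_left _ _))⟩
  -- bddAbove of images
  have hbddS : ∀ ζ : Fin n → ℝ, BddAbove ((fun s => ∑ j, s j * ζ j) '' S) := by
    intro ζ
    refine ⟨∑ j, M * |ζ j|, ?_⟩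
    rintro x ⟨s, hs, rfl⟩
    refine Finset.sum_le_sum fun j _ => ?_
    calc s j * ζ j ≤ |s j * ζ j| := le_abs_self _
      _ = |s j| * |ζ j| := abs_mul _ _
      _ ≤ M * |ζ j| := by
          have h1 := hpos s hs j
          have h2 := hM s hs j
          gcongr
          rwa [abs_of_nonneg h1]
  have hS0 : ∀ w : Fin n → ℂ, 0 ≤ HSI S w := fun w =>
    le_csSup (hbddS _) ⟨0, h0, by simp⟩
  have hext_coord : ∀ (t : {j : Fin n // a j ≠ 0} → ℝ) (j : {j : Fin n // a j ≠ 0}),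
      ext t j.1 = t j := by
    intro t j
    simp only [hext, dif_neg j.2]
  have hextT : ∀ t ∈ T, ext t ∈ S := fun t ht => ht
  -- sum identity
  have hsum : ∀ (t : {j : Fin n // a j ≠ 0} → ℝ) (ζ : Fin n → ℝ),
      ∑ j : {j : Fin n // a j ≠ 0}, t j * ζ j.1 = ∑ j, ext t j * ζ j := by
    intro t ζ
    have h1 : ∑ j : {j : Fin n // a j ≠ 0}, t j * ζ j.1
        = ∑ j : {j : Fin n // a j ≠ 0}, ext t j.1 * ζ j.1 :=
      Finset.sum_congr rfl fun j _ => by rw [hext_coord]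
    rw [h1, ← Finset.sum_subtype (Finset.univ.filter (fun j : Fin n => a j ≠ 0))
      (by simp) (fun j => ext t j * ζ j), Finset.sum_filter]
    refine Finset.sum_congr rfl fun j _ => ?_
    by_cases h : a j = 0
    · simp [hext, h]
    · simp [h]
  have hT0 : (0 : {j : Fin n // a j ≠ 0} → ℝ) ∈ T := by
    have : ext 0 = 0 := funext fun j => by by_cases h : a j = 0 <;> simp [hext, h]
    simpa [hTdef, this] using h0
  have hbddT : BddAbove ((fun t => ∑ j : {j : Fin n // a j ≠ 0}, t j * ξ j.1) '' T) := by
    refine ⟨∑ j : {j : Fin n // a j ≠ 0}, M * |ξ j.1|, ?_⟩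
    rintro x ⟨t, ht, rfl⟩
    refine Finset.sum_le_sum fun j _ => ?_
    have h1 : 0 ≤ t j := by
      have := hpos (ext t) (hextT t ht) j.1
      rwa [hext_coord] at this
    have h2 : t j ≤ M := by
      have := hM (ext t) (hextT t ht) j.1
      rwa [hext_coord] at this
    calc t j * ξ j.1 ≤ |t j * ξ j.1| := le_abs_self _
      _ = |t j| * |ξ j.1| := abs_mul _ _
      _ ≤ M * |ξ j.1| := by gcongr; rwa [abs_of_nonneg h1]
  set R : ℝ := sSup ((fun t => ∑ j : {j : Fin n // a j ≠ 0}, t j * ξ j.1) '' T) with hR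
  have hR0 : 0 ≤ R := le_csSup hbddT ⟨0, hT0, by simp⟩
  -- continuity of linear functionals
  have hlin_cont : ∀ ζ : Fin n → ℝ, Continuous (fun s : Fin n → ℝ => ∑ j, s j * ζ j) :=
    fun ζ => continuous_finset_sum _ fun j _ => (continuous_apply j).mul continuous_const
  have hoff_cont : Continuous
      (fun s : Fin n → ℝ => ∑ j ∈ Finset.univ.filter (fun j => a j = 0), s j) :=
    continuous_finset_sum _ fun j _ => continuous_apply j
  -- ξ vanishes on the zero coordinates
  have hξ0 : ∀ j, a j = 0 → ξ j = 0 := by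
    intro j h
    simp [hξ, h]
  -- key compactness lemma
  have hF : ∀ ε > 0, ∃ δ > 0, ∀ s ∈ S,
      (∑ j ∈ Finset.univ.filter (fun j => a j = 0), s j) ≤ δ → (∑ j, s j * ξ j) ≤ R + ε := by
    intro ε hε
    set K : Set (Fin n → ℝ) := S ∩ {s | R + ε ≤ ∑ j, s j * ξ j} with hK
    have hKc : IsCompact K := hc.inter_right (isClosed_le continuous_const (hlin_cont ξ))
    have hZc : ∀ k : ℕ, IsClosed
        {s : Fin n → ℝ | (∑ j ∈ Finset.univ.filter (fun j => a j = 0), s j) ≤ 1/(k+1)} :=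
      fun k => isClosed_le hoff_cont continuous_const
    have hempty : (K ∩ ⋂ k : ℕ,
        {s : Fin n → ℝ | (∑ j ∈ Finset.univ.filter (fun j => a j = 0), s j) ≤ 1/(k+1)}) = ∅ := by
      rw [Set.eq_empty_iff_forall_notMem]
      rintro s ⟨⟨hsS, hsR⟩, hsZ⟩
      simp only [Set.mem_iInter, Set.mem_setOf_eq] at hsZ
      have hoff0 : (∑ j ∈ Finset.univ.filter (fun j => a j = 0), s j) ≤ 0 :=
        ge_of_tendsto' tendsto_one_div_add_atTop_nhds_zero_nat fun k => hsZ k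
      have hoffeq : (∑ j ∈ Finset.univ.filter (fun j => a j = 0), s j) = 0 :=
        le_antisymm hoff0 (Finset.sum_nonneg fun j _ => hpos s hsS j)
      have hzero : ∀ j, a j = 0 → s j = 0 := by
        intro j hj
        exact (Finset.sum_eq_zero_iff_of_nonneg fun j _ => hpos s hsS j).mp hoffeq j (by simp [hj])
      have hsext : s = ext (fun j => s j.1) := by
        funext j
        by_cases h : a j = 0
        · simp [hext, h, hzero j h]
        · simp [hext, h]
      have hmem : (fun j : {j : Fin n // a j ≠ 0} => s j.1) ∈ T := by
        simp only [hTdef, Set.mem_setOf_eq, ← hsext]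
        exact hsS
      have hle : (∑ j, s j * ξ j) ≤ R := by
        calc (∑ j, s j * ξ j) = ∑ j, ext (fun j : {j : Fin n // a j ≠ 0} => s j.1) j * ξ j := by
              rw [← hsext]
          _ = ∑ j : {j : Fin n // a j ≠ 0}, s j.1 * ξ j.1 := (hsum (fun j => s j.1) ξ).symm
          _ ≤ R := le_csSup hbddT ⟨_, hmem, rfl⟩
      simp only [Set.mem_setOf_eq] at hsR
      linarith
    obtain ⟨t, ht⟩ := hKc.elim_finite_subfamily_closed _ hZc hempty
    set N : ℕ := t.sup id with hN
    refine ⟨1/(N+1), by positivity, ?_⟩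
    intro s hsS hoffle
    by_contra hcon
    push_neg at hcon
    have hsK : s ∈ K := ⟨hsS, le_of_lt hcon⟩
    have hsZ : s ∈ ⋂ k ∈ t, {s : Fin n → ℝ |
        (∑ j ∈ Finset.univ.filter (fun j => a j = 0), s j) ≤ 1/(k+1)} := by
      simp only [Set.mem_iInter, Set.mem_setOf_eq]
      intro k hk
      refine le_trans hoffle ?_
      have hkN : (k : ℝ) ≤ N := by exact_mod_cast Finset.le_sup (f := id) hk
      apply one_div_le_one_div_of_le (by positivity)
      linarith
    rw [Set.eq_empty_iff_forall_notMem] at ht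
    exact ht s ⟨hsK, hsZ⟩
  -- eventual upper bound
  have hG : ∀ ε > 0, ∀ᶠ w in nhdsWithin a {w : Fin n → ℂ | ∀ j, w j ≠ 0}, HSI S w ≤ R + ε := by
    intro ε hε
    obtain ⟨δ, hδ, hF'⟩ := hF (ε/2) (by positivity)
    set B : ℝ := ∑ j, M * (|ξ j| + 1) with hB
    have hB0 : 0 ≤ B := Finset.sum_nonneg fun j _ => by positivity
    set ε' : ℝ := min 1 (ε/(2*(n*M+1))) with hε'def
    have hε'pos : 0 < ε' := lt_min one_pos (by positivity)
    have hε'le1 : ε' ≤ 1 := min_le_left _ _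
    set r : ℝ := Real.exp (-(B/δ)) with hr
    have hrpos : 0 < r := Real.exp_pos _
    have hlogr : Real.log r = -(B/δ) := Real.log_exp _
    have hlogr0 : Real.log r ≤ 0 := by
      rw [hlogr]
      exact neg_nonpos.mpr (div_nonneg hB0 hδ.le)
    have hev : ∀ᶠ w : Fin n → ℂ in nhds a, ∀ j,
        (a j ≠ 0 → |Real.log (‖w j‖) - ξ j| ≤ ε') ∧
        (a j = 0 → ‖w j‖ ≤ r) := by
      rw [eventually_all]
      intro j
      by_cases h : a j = 0
      · have hcont : Tendsto (fun w : Fin n → ℂ => ‖w j‖) (nhds a)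
            (nhds (‖a j‖)) :=
          (continuous_norm.comp (continuous_apply j)).continuousAt
        rw [h, norm_zero] at hcont
        filter_upwards [hcont.eventually_le_const hrpos] with w hw
        exact ⟨fun h' => absurd h h', fun _ => hw⟩
      · have habs : ‖a j‖ ≠ 0 := by simpa using h
        have hA : Tendsto (fun w : Fin n → ℂ => ‖w j‖) (nhds a)
            (nhds (‖a j‖)) :=
          (continuous_norm.comp (continuous_apply j)).continuousAt
        have hcont : Tendsto (fun w : Fin n → ℂ => Real.log (‖w j‖)) (nhds a)
            (nhds (ξ j)) := Filter.Tendsto.comp (Real.continuousAt_log habs) hA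
        filter_upwards [hcont.eventually (Metric.closedBall_mem_nhds _ hε'pos)] with w hw
        refine ⟨fun _ => ?_, fun h' => absurd h' h⟩
        rw [Real.dist_eq] at hw
        exact hw
    filter_upwards [hev.filter_mono nhdsWithin_le_nhds, self_mem_nhdsWithin] with w hw hw0
    -- now bound HSI S w
    refine csSup_le ⟨_, ⟨0, h0, rfl⟩⟩ ?_
    rintro x ⟨s, hs, rfl⟩
    set logw : Fin n → ℝ := fun j => Real.log (‖w j‖) with hlogw
    show (∑ j, s j * logw j) ≤ R + ε
    have hlogw_lt : ∀ j, a j = 0 → logw j ≤ Real.log r := by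
      intro j hj
      exact Real.log_le_log (by simpa using hw0 j) ((hw j).2 hj)
    have hsplit := Finset.sum_filter_add_sum_filter_not Finset.univ
      (fun j => a j = 0) (fun j => s j * logw j)
    rw [← hsplit]
    by_cases hcase : (∑ j ∈ Finset.univ.filter (fun j => a j = 0), s j) ≤ δ
    · -- small off-part
      have hA0 : (∑ j ∈ Finset.univ.filter (fun j => a j = 0), s j * logw j) ≤ 0 := by
        refine Finset.sum_nonpos fun j hj => ?_
        simp only [Finset.mem_filter] at hj
        exact mul_nonpos_of_nonneg_of_nonpos (hpos s hs j) ((hlogw_lt j hj.2).trans hlogr0)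
      have hA1 : (∑ j ∈ Finset.univ.filter (fun j => ¬ a j = 0), s j * logw j)
          ≤ (∑ j, s j * ξ j) + (n : ℝ) * M * ε' := by
        have step1 : (∑ j ∈ Finset.univ.filter (fun j => ¬ a j = 0), s j * logw j)
            ≤ ∑ j ∈ Finset.univ.filter (fun j => ¬ a j = 0), (s j * ξ j + M * ε') := by
          refine Finset.sum_le_sum fun j hj => ?_
          simp only [Finset.mem_filter] at hj
          have hwj := (hw j).1 hj.2
          have h1 : logw j ≤ ξ j + ε' := by
            have := abs_le.mp hwj
            linarith [this.2]
          calc s j * logw j ≤ s j * (ξ j + ε') :=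
                mul_le_mul_of_nonneg_left h1 (hpos s hs j)
            _ = s j * ξ j + s j * ε' := by ring
            _ ≤ s j * ξ j + M * ε' := by
                have := hM s hs j
                nlinarith [hε'pos.le]
        refine step1.trans ?_
        rw [Finset.sum_add_distrib]
        have e1 : (∑ j ∈ Finset.univ.filter (fun j => ¬ a j = 0), s j * ξ j)
            = ∑ j, s j * ξ j := by
          rw [← Finset.sum_filter_add_sum_filter_not Finset.univ (fun j => a j = 0)
            (fun j => s j * ξ j)]
          have : (∑ j ∈ Finset.univ.filter (fun j => a j = 0), s j * ξ j) = 0 :=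
            Finset.sum_eq_zero fun j hj => by
              simp only [Finset.mem_filter] at hj
              rw [hξ0 j hj.2, mul_zero]
          rw [this, zero_add]
        have e2 : (∑ _j ∈ Finset.univ.filter (fun j => ¬ a j = 0), M * ε')
            ≤ (n : ℝ) * M * ε' := by
          rw [Finset.sum_const, nsmul_eq_mul]
          have hcard : ((Finset.univ.filter (fun j : Fin n => ¬ a j = 0)).card : ℝ) ≤ n := by
            exact_mod_cast le_trans (Finset.card_filter_le _ _) (le_of_eq (Finset.card_univ.trans (Fintype.card_fin n)))
          nlinarith [mul_nonneg (sub_nonneg.mpr hcard) (mul_nonneg hM0 hε'pos.le)]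
        rw [e1]
        linarith
      have hfin : (∑ j, s j * ξ j) ≤ R + ε/2 := hF' s hs hcase
      have hnm : (n : ℝ) * M * ε' ≤ ε/2 := by
        have h1 : ε' ≤ ε/(2*((n:ℝ)*M+1)) := min_le_right _ _
        have h2 : (0:ℝ) < 2*((n:ℝ)*M+1) := by positivity
        have h3 : ε' * (2*((n:ℝ)*M+1)) ≤ ε := by
          rw [← le_div_iff₀ h2]
          exact h1
        have hnm0 : (0:ℝ) ≤ (n:ℝ) * M := by positivity
        nlinarith [hε'pos.le]
      linarith
    · -- large off-part
      push_neg at hcase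
      have hA1 : (∑ j ∈ Finset.univ.filter (fun j => ¬ a j = 0), s j * logw j) ≤ B := by
        have step1 : (∑ j ∈ Finset.univ.filter (fun j => ¬ a j = 0), s j * logw j)
            ≤ ∑ j ∈ Finset.univ.filter (fun j => ¬ a j = 0), M * (|ξ j| + 1) := by
          refine Finset.sum_le_sum fun j hj => ?_
          simp only [Finset.mem_filter] at hj
          have hwj := (hw j).1 hj.2
          have h1 : |logw j| ≤ |ξ j| + 1 := by
            have := abs_sub_abs_le_abs_sub (logw j) (ξ j)
            linarith [hε'le1, this, hwj]
          calc s j * logw j ≤ |s j * logw j| := le_abs_self _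
            _ = |s j| * |logw j| := abs_mul _ _
            _ ≤ M * (|ξ j| + 1) := by
                have hp := hpos s hs j
                have hm := hM s hs j
                have : |s j| ≤ M := by rwa [abs_of_nonneg hp]
                exact mul_le_mul this h1 (abs_nonneg _) hM0
        refine step1.trans ?_
        refine Finset.sum_le_sum_of_subset_of_nonneg (Finset.filter_subset _ _)
          fun j _ _ => by positivity
      have hA0 : (∑ j ∈ Finset.univ.filter (fun j => a j = 0), s j * logw j) ≤ -B := by
        have step1 : (∑ j ∈ Finset.univ.filter (fun j => a j = 0), s j * logw j)
            ≤ ∑ j ∈ Finset.univ.filter (fun j => a j = 0), s j * Real.log r := by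
          refine Finset.sum_le_sum fun j hj => ?_
          simp only [Finset.mem_filter] at hj
          exact mul_le_mul_of_nonneg_left (hlogw_lt j hj.2) (hpos s hs j)
        refine step1.trans ?_
        rw [← Finset.sum_mul]
        calc (∑ j ∈ Finset.univ.filter (fun j => a j = 0), s j) * Real.log r
            ≤ δ * Real.log r := mul_le_mul_of_nonpos_right hcase.le hlogr0
          _ = -B := by
              rw [hlogr, mul_neg, mul_comm, div_mul_cancel₀ _ hδ.ne']
      linarith
  -- upper bound for the limsup
  have hupper : limsup (fun w : Fin n → ℂ => HSI S w)
      (nhdsWithin a {w : Fin n → ℂ | ∀ j, w j ≠ 0}) ≤ R := by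
    refine le_of_forall_pos_le_add fun ε hε => ?_
    exact limsup_le_of_le (isCoboundedUnder_le_of_le _ fun w => hS0 w) (hG ε hε)
  -- lower bound for the limsup
  have hbddab : IsBoundedUnder (· ≤ ·) (nhdsWithin a {w : Fin n → ℂ | ∀ j, w j ≠ 0})
      (fun w : Fin n → ℂ => HSI S w) := ⟨R + 1, hG 1 one_pos⟩
  have hlower : R ≤ limsup (fun w : Fin n → ℂ => HSI S w)
      (nhdsWithin a {w : Fin n → ℂ | ∀ j, w j ≠ 0}) := by
    refine csSup_le ⟨_, ⟨0, hT0, rfl⟩⟩ ?_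
    rintro x ⟨t, ht, rfl⟩
    have htend : Tendsto
        (fun w : Fin n → ℂ => ∑ j : {j : Fin n // a j ≠ 0}, t j * Real.log (‖w j.1‖))
        (nhds a) (nhds (∑ j : {j : Fin n // a j ≠ 0}, t j * ξ j.1)) := by
      refine tendsto_finset_sum _ fun j _ => Tendsto.const_mul _ ?_
      have hA : Tendsto (fun w : Fin n → ℂ => ‖w j.1‖) (nhds a)
          (nhds (‖a j.1‖)) :=
        (continuous_norm.comp (continuous_apply j.1)).continuousAt
      exact Filter.Tendsto.comp (Real.continuousAt_log (by simpa using j.2)) hA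
    have htend' := htend.mono_left (nhdsWithin_le_nhds
      (s := {w : Fin n → ℂ | ∀ j, w j ≠ 0}))
    show (∑ j : {j : Fin n // a j ≠ 0}, t j * ξ j.1) ≤ _
    rw [← htend'.limsup_eq]
    refine limsup_le_limsup (Eventually.of_forall fun w => ?_)
      htend'.isCoboundedUnder_le hbddab
    show (∑ j : {j : Fin n // a j ≠ 0}, t j * Real.log (‖w j.1‖)) ≤ HSI S w
    have hrw : (∑ j : {j : Fin n // a j ≠ 0}, t j * Real.log (‖w j.1‖))
        = ∑ j, ext t j * Real.log (‖w j‖) :=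
      hsum t (fun j => Real.log (‖w j‖))
    rw [hrw]
    exact le_csSup (hbddS _) ⟨ext t, hextT t ht, rfl⟩
  have hRHS : HSI {t : {j : Fin n // a j ≠ 0} → ℝ |
      (fun j : Fin n => if h : a j = 0 then 0 else t ⟨j, h⟩) ∈ S} (fun j => a j.1) = R := rfl
  rw [hRHS]
  exact le_antisymm hupper hlower
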